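/- Let A be a real symmetric n×n matrix, O a real orthogonal n×n matrix, X = (1+A²)^{-1/2}O, Y = A(1+A²)^{-1/2}O, S = fromBlocks X (−Y) Y X, and for s > 0 let Γ_sqz(n,s) = diag(s,…,s,s⁻¹,…,s⁻¹) (n entries s followed by n entries s⁻¹). Let Γ_G = S · Γ_sqz(n,s) · Sᵀ be the covariance matrix of the finitely squeezed cluster state. Then for the n×2n nullifier matrix N = [−A | 1ₙ] (i.e., N·(Q,P)ᵀ = P − AQ), one has N Γ_G Nᵀ = s⁻¹(1 + A²). In particular the nullifier covariance tends to 0 as s → ∞. -/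

import Mathlib

open Matrix

noncomputable section

/-- For a real symmetric matrix `A`, the matrix `1 + A²` is positive definite. -/
theorem onePlusSq_posDef {n : ℕ} (A : Matrix (Fin n) (Fin n) ℝ) (hA : Aᵀ = A) :
    (1 + A * A).PosDef := by
  have h2 : (A * A).PosSemidef := by
    have h := Matrix.posSemidef_conjTranspose_mul_self A
    simpa [Matrix.conjTranspose_eq_transpose_of_trivial, hA] using h
  exact Matrix.PosDef.add_posSemidef Matrix.PosDef.one h2

/-- The positive semidefinite square root of a positive semidefinite matrix
(the former Mathlib `Matrix.PosSemidef.sqrt`, removed upstream). -/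
def posSemidefSqrt {n : ℕ} {M : Matrix (Fin n) (Fin n) ℝ} (hM : M.PosSemidef) :
    Matrix (Fin n) (Fin n) ℝ :=
  hM.1.eigenvectorUnitary.1 * diagonal ((↑) ∘ Real.sqrt ∘ hM.1.eigenvalues) *
    (star hM.1.eigenvectorUnitary : Matrix (Fin n) (Fin n) ℝ)

/-- `(1 + A²)^{-1/2}`: the inverse of the unique positive-definite square root of `1 + A²`. -/
def invSqrtOnePlusSq {n : ℕ} (A : Matrix (Fin n) (Fin n) ℝ) (hA : Aᵀ = A) :
    Matrix (Fin n) (Fin n) ℝ :=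
  (posSemidefSqrt (onePlusSq_posDef A hA).posSemidef)⁻¹

/-- Covariance matrix `diag(s,…,s,s⁻¹,…,s⁻¹)` of `n` equally squeezed vacuum modes,
in quadrature ordering `(Q₁,…,Qₙ,P₁,…,Pₙ)`. -/
def GammaSqz (n : ℕ) (s : ℝ) : Matrix (Fin n ⊕ Fin n) (Fin n ⊕ Fin n) ℝ :=
  Matrix.fromBlocks (s • 1) 0 0 (s⁻¹ • 1)

lemma key {n : ℕ} (A O : Matrix (Fin n) (Fin n) ℝ)
    (hA : Aᵀ = A) (hO : Oᵀ * O = 1) (s : ℝ) :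
      Matrix.fromCols (-A) (1 : Matrix (Fin n) (Fin n) ℝ) *
          (Matrix.fromBlocks (invSqrtOnePlusSq A hA * O)
              (-(A * invSqrtOnePlusSq A hA * O))
              (A * invSqrtOnePlusSq A hA * O) (invSqrtOnePlusSq A hA * O) *
            GammaSqz n s *
            (Matrix.fromBlocks (invSqrtOnePlusSq A hA * O)
                (-(A * invSqrtOnePlusSq A hA * O))
                (A * invSqrtOnePlusSq A hA * O) (invSqrtOnePlusSq A hA * O))ᵀ) *
          (Matrix.fromCols (-A) 1)ᵀ = s⁻¹ • (1 + A * A) := by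
  set M : Matrix (Fin n) (Fin n) ℝ := 1 + A * A with hM
  set r : Matrix (Fin n) (Fin n) ℝ := posSemidefSqrt (onePlusSq_posDef A hA).posSemidef with hr
  have hrr : r * r = M := by
    have hP := (onePlusSq_posDef A hA).posSemidef
    have hspec := hP.1.spectral_theorem
    rw [Unitary.conjStarAlgAut_apply] at hspec
    have hU := Unitary.coe_star_mul_self hP.1.eigenvectorUnitary
    rw [hr, posSemidefSqrt]
    refine Eq.trans ?_ hspec.symm
    simp only [Matrix.mul_assoc]
    rw [← Matrix.mul_assoc (star _) _ _, hU, Matrix.one_mul,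
      ← Matrix.mul_assoc (diagonal _) (diagonal _), diagonal_mul_diagonal]
    congr 1
    congr 1
    congr 1
    funext i
    simp [Real.mul_self_sqrt (hP.eigenvalues_nonneg i)]
  have hMdet : IsUnit M.det := Ne.isUnit (onePlusSq_posDef A hA).det_pos.ne'
  have hrT : rᵀ = r := by
    rw [hr, posSemidefSqrt]
    simp [Matrix.transpose_mul, Matrix.star_eq_conjTranspose,
      conjTranspose_eq_transpose_of_trivial, Matrix.mul_assoc]
  set B : Matrix (Fin n) (Fin n) ℝ := invSqrtOnePlusSq A hA with hB
  have hBr : B = r⁻¹ := rfl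
  have hBT : Bᵀ = B := by rw [hBr, Matrix.transpose_nonsing_inv, hrT]
  have hMT : Mᵀ = M := by simp [hM, transpose_add, transpose_mul, hA]
  have hBB : B * B = M⁻¹ := by rw [hBr, ← Matrix.mul_inv_rev, hrr]
  set X : Matrix (Fin n) (Fin n) ℝ := B * O with hX
  set Y : Matrix (Fin n) (Fin n) ℝ := A * B * O with hY
  set N := Matrix.fromCols (-A) (1 : Matrix (Fin n) (Fin n) ℝ) with hN
  set S := Matrix.fromBlocks X (-Y) Y X with hS
  set C : Matrix (Fin n) (Fin n) ℝ := M * B * O with hC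
  have h1 : (-A) * X + 1 * Y = 0 := by rw [hX, hY]; noncomm_ring
  have h2 : (-A) * (-Y) + 1 * X = C := by rw [hX, hY, hC, hM]; noncomm_ring
  have hNS : N * S = Matrix.fromCols 0 C := by
    rw [hN, hS, fromCols_mul_fromBlocks, h1, h2]
  have hNSΓ : N * S * GammaSqz n s = Matrix.fromCols 0 (s⁻¹ • C) := by
    rw [hNS, GammaSqz, fromCols_mul_fromBlocks]
    simp [Matrix.mul_smul]
  have hCCT : C * Cᵀ = M := by
    have hOOT : O * Oᵀ = 1 := mul_eq_one_comm.mp hO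
    calc C * Cᵀ = M * B * (O * Oᵀ) * (B * M) := by
          rw [hC, transpose_mul, transpose_mul, hBT, hMT]; noncomm_ring
      _ = M * (B * B) * M := by rw [hOOT]; noncomm_ring
      _ = M := by
          rw [hBB, Matrix.mul_assoc, Matrix.nonsing_inv_mul M hMdet, mul_one]
  calc N * (S * GammaSqz n s * Sᵀ) * Nᵀ
      = (N * S * GammaSqz n s) * (N * S)ᵀ := by
        rw [transpose_mul]; simp only [Matrix.mul_assoc]
    _ = Matrix.fromCols 0 (s⁻¹ • C) * Matrix.fromRows 0 Cᵀ := by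
        rw [hNSΓ, hNS, transpose_fromCols, transpose_zero]
    _ = s⁻¹ • M := by
        rw [fromCols_mul_fromRows, Matrix.zero_mul, zero_add, Matrix.smul_mul, hCCT]

/-- For the finitely squeezed cluster state with covariance matrix
`Γ_G = S Γ_sqz(n,s) Sᵀ`, the nullifier matrix `N = [−A | 1]` satisfies
`N Γ_G Nᵀ = s⁻¹ (1 + A²)`; in particular, the nullifier covariance tends
to `0` as `s → ∞`. -/
theorem nullifier_covariance {n : ℕ} (A O : Matrix (Fin n) (Fin n) ℝ)
    (hA : Aᵀ = A) (hO : Oᵀ * O = 1) :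
    (∀ s : ℝ, 0 < s →
      Matrix.fromCols (-A) (1 : Matrix (Fin n) (Fin n) ℝ) *
          (Matrix.fromBlocks (invSqrtOnePlusSq A hA * O)
              (-(A * invSqrtOnePlusSq A hA * O))
              (A * invSqrtOnePlusSq A hA * O) (invSqrtOnePlusSq A hA * O) *
            GammaSqz n s *
            (Matrix.fromBlocks (invSqrtOnePlusSq A hA * O)
                (-(A * invSqrtOnePlusSq A hA * O))
                (A * invSqrtOnePlusSq A hA * O) (invSqrtOnePlusSq A hA * O))ᵀ) *
          (Matrix.fromCols (-A) 1)ᵀ = s⁻¹ • (1 + A * A)) ∧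
    Filter.Tendsto
      (fun s : ℝ =>
        Matrix.fromCols (-A) (1 : Matrix (Fin n) (Fin n) ℝ) *
          (Matrix.fromBlocks (invSqrtOnePlusSq A hA * O)
              (-(A * invSqrtOnePlusSq A hA * O))
              (A * invSqrtOnePlusSq A hA * O) (invSqrtOnePlusSq A hA * O) *
            GammaSqz n s *
            (Matrix.fromBlocks (invSqrtOnePlusSq A hA * O)
                (-(A * invSqrtOnePlusSq A hA * O))
                (A * invSqrtOnePlusSq A hA * O) (invSqrtOnePlusSq A hA * O))ᵀ) *
          (Matrix.fromCols (-A) 1)ᵀ)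
      Filter.atTop (nhds (0 : Matrix (Fin n) (Fin n) ℝ)) := by
  refine ⟨fun s _ => key A O hA hO s, ?_⟩
  have hfun : (fun s : ℝ =>
      Matrix.fromCols (-A) (1 : Matrix (Fin n) (Fin n) ℝ) *
          (Matrix.fromBlocks (invSqrtOnePlusSq A hA * O)
              (-(A * invSqrtOnePlusSq A hA * O))
              (A * invSqrtOnePlusSq A hA * O) (invSqrtOnePlusSq A hA * O) *
            GammaSqz n s *
            (Matrix.fromBlocks (invSqrtOnePlusSq A hA * O)
                (-(A * invSqrtOnePlusSq A hA * O))
                (A * invSqrtOnePlusSq A hA * O) (invSqrtOnePlusSq A hA * O))ᵀ) *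
          (Matrix.fromCols (-A) 1)ᵀ)
      = fun s : ℝ => s⁻¹ • (1 + A * A) := funext fun s => key A O hA hO s
  rw [hfun]
  have h0 : (0 : Matrix (Fin n) (Fin n) ℝ) = (0 : ℝ) • (1 + A * A) := by simp
  rw [h0]
  exact tendsto_inv_atTop_zero.smul_const _
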